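/- Let E be a complete metric space, let F : E → E be a continuous bijection whose inverse F⁻¹ is Lipschitz with constant e^L for some L ≥ 0, and let (y_j)_{j≥0} be a sequence in E such that for some β > L and some ĵ, dist(y_{j+1}, F(y_j)) ≤ e^{−β·j} for all j ≥ ĵ. Then for every δ with e^{−β} < δ < e^{−L} there exist a point z* ∈ E and a constant C ≥ 0 such that dist(y_j, F^{(j)}(z*)) ≤ C·δ^j for all j ≥ 0, where F^{(j)} denotes the j-fold iterate of F. -/
import Mathlib


theorem stmt14 (E : Type*) [MetricSpace E] [CompleteSpace E]
    (F G : E → E) (hFcont : Continuous F) (hFbij : Function.Bijective F)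
    -- `G` is the inverse of `F`
    (hGF : ∀ x, G (F x) = x) (hFG : ∀ x, F (G x) = x)
    (L : ℝ) (hL : 0 ≤ L)
    -- `F⁻¹` is Lipschitz with constant `e^L`
    (hGlip : ∀ x y : E, dist (G x) (G y) ≤ Real.exp L * dist x y)
    (y : ℕ → E) (β : ℝ) (hβ : L < β) (jhat : ℕ)
    (htrack : ∀ j : ℕ, jhat ≤ j → dist (y (j + 1)) (F (y j)) ≤ Real.exp (-β * j)) :
    ∀ δ : ℝ, Real.exp (-β) < δ → δ < Real.exp (-L) →
      ∃ (zstar : E) (C : ℝ), 0 ≤ C ∧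
        ∀ j : ℕ, dist (y j) (F^[j] zstar) ≤ C * δ ^ j := by
  intro δ hδ1 hδ2
  have hδ0 : 0 < δ := lt_trans (Real.exp_pos _) hδ1
  set r : ℝ := Real.exp (L - β) with hr_def
  have hr0 : 0 < r := Real.exp_pos _
  have hr1 : r < 1 := by
    rw [hr_def, Real.exp_lt_one_iff]; linarith
  have h1r : 0 < 1 - r := by linarith
  -- iterated inverse identity
  have hFGiter : ∀ (j : ℕ) (x : E), F^[j] (G^[j] x) = x := by
    intro j
    induction j with
    | zero => intro x; simp
    | succ n ih =>
      intro x
      rw [Function.iterate_succ_apply F n, Function.iterate_succ_apply' G n, hFG, ih]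
  -- iterated Lipschitz bound
  have hGlipm : ∀ (m : ℕ) (a b : E),
      dist (G^[m] a) (G^[m] b) ≤ Real.exp (L * m) * dist a b := by
    intro m
    induction m with
    | zero => intro a b; simp
    | succ n ih =>
      intro a b
      rw [Function.iterate_succ_apply G n, Function.iterate_succ_apply G n]
      calc dist (G^[n] (G a)) (G^[n] (G b)) ≤ Real.exp (L * n) * dist (G a) (G b) := ih _ _
        _ ≤ Real.exp (L * n) * (Real.exp L * dist a b) := by
            have := hGlip a b
            nlinarith [Real.exp_pos (L * (n:ℝ)), dist_nonneg (x := G a) (y := G b)]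
        _ = Real.exp (L * (n+1 : ℕ)) * dist a b := by
            rw [← mul_assoc, ← Real.exp_add]; push_cast; ring_nf
  set z : ℕ → E := fun k => G^[k] (y k) with hz_def
  -- key estimate
  have hkey : ∀ j i : ℕ, jhat ≤ j + i →
      dist (F^[j] (z (j + i))) (F^[j] (z (j + i + 1))) ≤ Real.exp (L - β * j) * r ^ i := by
    intro j i hji
    have e1 : F^[j] (z (j + i)) = G^[i] (y (j + i)) := by
      rw [hz_def]
      simp only
      rw [Function.iterate_add_apply G j i, hFGiter]
    have e2 : F^[j] (z (j + i + 1)) = G^[i] (G (y (j + i + 1))) := by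
      rw [hz_def]
      simp only
      rw [show j + i + 1 = j + (i + 1) from by ring,
        Function.iterate_add_apply G j (i + 1), hFGiter, Function.iterate_succ_apply G i]
    rw [e1, e2]
    have hd : dist (y (j + i)) (G (y (j + i + 1))) ≤ Real.exp L * Real.exp (-β * (j + i : ℕ)) := by
      calc dist (y (j + i)) (G (y (j + i + 1)))
          = dist (G (F (y (j + i)))) (G (y (j + i + 1))) := by rw [hGF]
        _ ≤ Real.exp L * dist (F (y (j + i))) (y (j + i + 1)) := hGlip _ _
        _ = Real.exp L * dist (y (j + i + 1)) (F (y (j + i))) := by rw [dist_comm]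
        _ ≤ Real.exp L * Real.exp (-β * (j + i : ℕ)) := by
            have := htrack (j + i) hji
            nlinarith [Real.exp_pos L]
    calc dist (G^[i] (y (j + i))) (G^[i] (G (y (j + i + 1))))
        ≤ Real.exp (L * i) * dist (y (j + i)) (G (y (j + i + 1))) := hGlipm i _ _
      _ ≤ Real.exp (L * i) * (Real.exp L * Real.exp (-β * (j + i : ℕ))) := by
          nlinarith [Real.exp_pos (L * (i:ℝ))]
      _ = Real.exp (L - β * j) * r ^ i := by
          rw [hr_def, ← Real.exp_nat_mul, ← Real.exp_add, ← Real.exp_add, ← Real.exp_add]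
          push_cast; ring_nf
  -- Cauchy sequence
  set w : ℕ → E := fun n => z (jhat + n) with hw_def
  have hwcauchy : CauchySeq w := by
    apply cauchySeq_of_le_geometric r (Real.exp L * r ^ jhat) hr1
    intro n
    have := hkey 0 (jhat + n) (by omega)
    simp only [Function.iterate_zero_apply, Nat.zero_add] at this
    calc dist (w n) (w (n + 1)) = dist (z (jhat + n)) (z (jhat + n + 1)) := by
          rw [hw_def]; simp only; rw [show jhat + (n + 1) = jhat + n + 1 from by ring]
      _ ≤ Real.exp (L - β * (0:ℕ)) * r ^ (jhat + n) := this
      _ = Real.exp L * r ^ jhat * r ^ n := by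
          rw [pow_add]; push_cast; ring_nf
  obtain ⟨zstar, hzstar⟩ := cauchySeq_tendsto_of_complete hwcauchy
  -- main estimate for j ≥ jhat
  have hmain : ∀ j : ℕ, jhat ≤ j →
      dist (y j) (F^[j] zstar) ≤ Real.exp (L - β * j) / (1 - r) := by
    intro j hj
    have hzt : Filter.Tendsto (fun n => z (j + n)) Filter.atTop (nhds zstar) := by
      have heq : ∀ n, z (j + n) = w (n + (j - jhat)) := by
        intro n; rw [hw_def]; simp only; congr 1; omega
      simp only [heq]
      exact hzstar.comp (Filter.tendsto_add_atTop_nat (j - jhat))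
    have hFt : Filter.Tendsto (fun n => dist (y j) (F^[j] (z (j + n)))) Filter.atTop
        (nhds (dist (y j) (F^[j] zstar))) := by
      exact (Filter.Tendsto.dist tendsto_const_nhds
        (((hFcont.iterate j).tendsto zstar).comp hzt))
    refine le_of_tendsto hFt (Filter.Eventually.of_forall fun n => ?_)
    have hbound : dist (y j) (F^[j] (z (j + n))) ≤
        ∑ i ∈ Finset.range n, Real.exp (L - β * j) * r ^ i := by
      have h0 : F^[j] (z (j + 0)) = y j := by
        rw [hz_def]; simp only; rw [Nat.add_zero, hFGiter]
      calc dist (y j) (F^[j] (z (j + n)))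
          = dist (F^[j] (z (j + 0))) (F^[j] (z (j + n))) := by rw [h0]
        _ ≤ ∑ i ∈ Finset.range n, dist (F^[j] (z (j + i))) (F^[j] (z (j + (i + 1)))) :=
            dist_le_range_sum_dist (fun i => F^[j] (z (j + i))) n
        _ ≤ ∑ i ∈ Finset.range n, Real.exp (L - β * j) * r ^ i := by
            apply Finset.sum_le_sum
            intro i _
            have := hkey j i (by omega)
            rw [show j + (i + 1) = j + i + 1 from by ring]
            exact this
    refine hbound.trans ?_
    rw [← Finset.mul_sum]
    have hgs : ∑ i ∈ Finset.range n, r ^ i ≤ 1 / (1 - r) := by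
      rw [geom_sum_eq (ne_of_lt hr1)]
      have heq : (r ^ n - 1) / (r - 1) = (1 - r ^ n) / (1 - r) := by
        rw [div_eq_div_iff (by linarith) (by linarith)]; ring
      rw [heq]
      have hn : 0 ≤ r ^ n := pow_nonneg hr0.le n
      gcongr
      linarith
    calc Real.exp (L - β * j) * ∑ i ∈ Finset.range n, r ^ i
        ≤ Real.exp (L - β * j) * (1 / (1 - r)) := by
          nlinarith [Real.exp_pos (L - β * (j:ℝ))]
      _ = Real.exp (L - β * j) / (1 - r) := by ring
  -- assemble constant
  set A : ℝ := Real.exp L / (1 - r) with hA_def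
  have hA0 : 0 ≤ A := div_nonneg (Real.exp_pos L).le h1r.le
  set C : ℝ := A + ∑ i ∈ Finset.range jhat, dist (y i) (F^[i] zstar) / δ ^ i with hC_def
  have hsum0 : 0 ≤ ∑ i ∈ Finset.range jhat, dist (y i) (F^[i] zstar) / δ ^ i :=
    Finset.sum_nonneg fun i _ => div_nonneg dist_nonneg (pow_pos hδ0 i).le
  refine ⟨zstar, C, by rw [hC_def]; linarith, fun j => ?_⟩
  by_cases hj : jhat ≤ j
  · have h1 := hmain j hj
    have h2 : Real.exp (L - β * j) / (1 - r) = A * (Real.exp (-β)) ^ j := by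
      rw [hA_def, ← Real.exp_nat_mul, div_mul_eq_mul_div, ← Real.exp_add]
      congr 2
      ring
    have h3 : (Real.exp (-β)) ^ j ≤ δ ^ j :=
      pow_le_pow_left₀ (Real.exp_pos _).le hδ1.le j
    have h4 : A ≤ C := by rw [hC_def]; linarith
    calc dist (y j) (F^[j] zstar) ≤ A * (Real.exp (-β)) ^ j := by rw [← h2]; exact h1
      _ ≤ A * δ ^ j := by nlinarith
      _ ≤ C * δ ^ j := by nlinarith [pow_pos hδ0 j]
  · push_neg at hj
    have hterm : dist (y j) (F^[j] zstar) / δ ^ j ≤ C := by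
      rw [hC_def]
      have : dist (y j) (F^[j] zstar) / δ ^ j ≤
          ∑ i ∈ Finset.range jhat, dist (y i) (F^[i] zstar) / δ ^ i :=
        Finset.single_le_sum (f := fun i => dist (y i) (F^[i] zstar) / δ ^ i)
          (fun i _ => div_nonneg dist_nonneg (pow_pos hδ0 i).le) (Finset.mem_range.mpr hj)
      linarith
    have := (div_le_iff₀ (pow_pos hδ0 j)).mp hterm
    linarith
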